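/- arXiv:2210.02410 — 2 statements merged into one kernel-verified Lean document; each statement's English description precedes it below -/
import Mathlib

section
/- Identical-elements invariance: Let x_1,...,x_n have feature maps φ(x_i) ∈ ℝ^d with unit norm, kernel k(x_i,x_j) = ⟨φ(x_i),φ(x_j)⟩, and probability weights p. Suppose φ(x_i) = φ(x_j) for some i ≠ j. Let p' be obtained from p by setting p'_i = p_i + p_j and p'_j = 0 (other entries unchanged). Then the weighted covariance matrices Σ_p = Σ_k p_k φ(x_k)φ(x_k)ᵀ and Σ_{p'} coincide, hence the probability-weighted Vendi Scores are equal. -/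
open Matrix BigOperators Polynomial

variable {m : ℕ}

private lemma charmatrix_conj {R : Type*} [CommRing R] (Q H P : Matrix (Fin m) (Fin m) R)
    (hQP : Q * P = 1) :
    charmatrix (Q * H * P) = Q.map C * charmatrix H * P.map C := by
  have h1 : (Q.map (C : R →+* R[X])) * (P.map C) = 1 := by
    rw [← Matrix.map_mul, hQP, Matrix.map_one _ (map_zero C) (map_one C)]
  unfold charmatrix
  rw [Matrix.mul_sub, Matrix.sub_mul]
  congr 1
  · rw [scalar_apply, ← Matrix.smul_one_eq_diagonal, mul_smul_comm, smul_mul_assoc, mul_one, h1]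
  · simp only [RingHom.mapMatrix_apply]
    rw [← Matrix.map_mul, ← Matrix.map_mul]

private lemma charpoly_conj {R : Type*} [CommRing R] (Q H P : Matrix (Fin m) (Fin m) R)
    (hQP : Q * P = 1) :
    (Q * H * P).charpoly = H.charpoly := by
  have h1 : (Q.map (C : R →+* R[X])) * (P.map C) = 1 := by
    rw [← Matrix.map_mul, hQP, Matrix.map_one _ (map_zero C) (map_one C)]
  rw [Matrix.charpoly, charmatrix_conj Q H P hQP, det_mul, det_mul, Matrix.charpoly,
    mul_comm ((Q.map C).det), mul_assoc, ← det_mul, h1, det_one, mul_one]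

private lemma charpoly_diag {R : Type*} [CommRing R] (v : Fin m → R) :
    (Matrix.diagonal v).charpoly = ∏ i, (X - C (v i)) := by
  have : charmatrix (Matrix.diagonal v) = Matrix.diagonal fun i => X - C (v i) := by
    ext i j
    rcases eq_or_ne i j with rfl | h
    · simp
    · simp [h]
  rw [Matrix.charpoly, this, det_diagonal]

private lemma herm_charpoly (H : Matrix (Fin m) (Fin m) ℝ) (hH : H.IsHermitian) :
    H.charpoly = ∏ i, (X - C (hH.eigenvalues i)) := by
  have hspec := hH.spectral_theorem
  set U : Matrix (Fin m) (Fin m) ℝ := (hH.eigenvectorUnitary : Matrix (Fin m) (Fin m) ℝ)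
  have hU : U * star U = 1 := (Matrix.mem_unitaryGroup_iff).mp hH.eigenvectorUnitary.2
  have : H = U * Matrix.diagonal (RCLike.ofReal ∘ hH.eigenvalues) * star U := hspec
  conv_lhs => rw [this]
  rw [charpoly_conj _ _ _ hU, charpoly_diag]
  simp

private lemma eig_multiset (H : Matrix (Fin m) (Fin m) ℝ) (hH : H.IsHermitian) :
    (Finset.univ.val.map hH.eigenvalues) = H.charpoly.roots := by
  rw [herm_charpoly H hH]
  rw [show (∏ i, (X - C (hH.eigenvalues i))) =
      ((Finset.univ.val.map hH.eigenvalues).map fun a => X - C a).prod by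
    rw [Multiset.map_map]; rfl]
  rw [Polynomial.roots_multiset_prod_X_sub_C]

private lemma entropy_eq (H H' : Matrix (Fin m) (Fin m) ℝ) (hH : H.IsHermitian)
    (hH' : H'.IsHermitian) (hcp : H.charpoly = H'.charpoly) (F : ℝ → ℝ) :
    ∑ k, F (hH.eigenvalues k) = ∑ k, F (hH'.eigenvalues k) := by
  have h1 := eig_multiset H hH
  have h2 := eig_multiset H' hH'
  rw [hcp] at h1
  have h3 : Finset.univ.val.map hH.eigenvalues = Finset.univ.val.map hH'.eigenvalues :=
    h1.trans h2.symm
  calc ∑ k, F (hH.eigenvalues k) = ((Finset.univ.val.map hH.eigenvalues).map F).sum := by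
        rw [Multiset.map_map]; rfl
    _ = ((Finset.univ.val.map hH'.eigenvalues).map F).sum := by rw [h3]
    _ = ∑ k, F (hH'.eigenvalues k) := by rw [Multiset.map_map]; rfl

private lemma sum_two' {n : ℕ} {i j : Fin n} (hij : i ≠ j) (u v : ℝ) (f : Fin n → ℝ) :
    ∑ k, (if k = i then u else if k = j then v else 0) * f k = u * f i + v * f j := by
  have h : ∀ k : Fin n, (if k = i then u else if k = j then v else 0) * f k
      = (if k = i then u * f i else 0) + (if k = j then v * f j else 0) := by
    intro k
    rcases eq_or_ne k i with rfl | h1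
    · simp [hij]
    · rcases eq_or_ne k j with rfl | h2
      · simp [h1]
      · simp [h1, h2]
  rw [Finset.sum_congr rfl fun k _ => h k, Finset.sum_add_distrib]
  simp

private lemma sum_one' {n : ℕ} (a : Fin n) (f : Fin n → ℝ) :
    ∑ k, (if k = a then (1:ℝ) else 0) * f k = f a := by simp

private def rotQ {n : ℕ} (i j : Fin n) (c t : ℝ) : Matrix (Fin n) (Fin n) ℝ :=
  Matrix.of fun a b =>
    if a = i then (if b = i then c else if b = j then t else 0)
    else if a = j then (if b = i then -t else if b = j then c else 0)
    else if b = a then 1 else 0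

section rotlem
variable {n : ℕ} {i j : Fin n} {c t : ℝ}

private lemma rotQ_apply_i (k : Fin n) :
    rotQ i j c t i k = if k = i then c else if k = j then t else 0 := by simp [rotQ]

private lemma rotQ_apply_j (hij : i ≠ j) (k : Fin n) :
    rotQ i j c t j k = if k = i then -t else if k = j then c else 0 := by
  simp [rotQ, Ne.symm hij]

private lemma rotQ_apply_other {a : Fin n} (ha1 : a ≠ i) (ha2 : a ≠ j) (k : Fin n) :
    rotQ i j c t a k = if k = a then 1 else 0 := by simp [rotQ, ha1, ha2]

private lemma rotQQ (hij : i ≠ j) (h1 : c * c + t * t = 1) :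
    rotQ i j c t * (rotQ i j c t)ᵀ = 1 := by
  ext a b
  rw [Matrix.mul_apply]
  simp only [Matrix.transpose_apply]
  by_cases ha1 : a = i
  · simp only [ha1, rotQ_apply_i]
    rw [sum_two' hij]
    by_cases hb1 : b = i
    · have hone : (1 : Matrix (Fin n) (Fin n) ℝ) a b = 1 := by rw [ha1, hb1]; simp
      rw [hone, hb1]
      simp only [rotQ_apply_i]
      simp [hij, Ne.symm hij]
      linarith
    · by_cases hb2 : b = j
      · have hone : (1 : Matrix (Fin n) (Fin n) ℝ) a b = 0 := by
          rw [ha1, hb2]; simp [Matrix.one_apply, hij]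
        rw [hone, hb2]
        simp only [rotQ_apply_j hij]
        simp [hij, Ne.symm hij]
        ring
      · have hone : (1 : Matrix (Fin n) (Fin n) ℝ) a b = 0 := by
          rw [ha1]; simp [Matrix.one_apply, Ne.symm hb1]
        rw [hone]
        simp only [rotQ_apply_other hb1 hb2]
        simp [Ne.symm hb1, Ne.symm hb2]
  · by_cases ha2 : a = j
    · simp only [ha2, rotQ_apply_j hij]
      rw [sum_two' hij]
      by_cases hb1 : b = i
      · have hone : (1 : Matrix (Fin n) (Fin n) ℝ) a b = 0 := by
          rw [ha2, hb1]; simp [Matrix.one_apply, Ne.symm hij]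
        rw [hone, hb1]
        simp only [rotQ_apply_i]
        simp [hij, Ne.symm hij]
        ring
      · by_cases hb2 : b = j
        · have hone : (1 : Matrix (Fin n) (Fin n) ℝ) a b = 1 := by rw [ha2, hb2]; simp
          rw [hone, hb2]
          simp only [rotQ_apply_j hij]
          simp [hij, Ne.symm hij]
          linarith
        · have hone : (1 : Matrix (Fin n) (Fin n) ℝ) a b = 0 := by
            rw [ha2]; simp [Matrix.one_apply, Ne.symm hb2]
          rw [hone]
          simp only [rotQ_apply_other hb1 hb2]
          simp [Ne.symm hb1, Ne.symm hb2]
    · simp only [rotQ_apply_other ha1 ha2]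
      rw [sum_one' a]
      by_cases hb1 : b = i
      · have hone : (1 : Matrix (Fin n) (Fin n) ℝ) a b = 0 := by
          rw [hb1]; simp [Matrix.one_apply, ha1]
        rw [hone, hb1, rotQ_apply_i, if_neg ha1, if_neg ha2]
      · by_cases hb2 : b = j
        · have hone : (1 : Matrix (Fin n) (Fin n) ℝ) a b = 0 := by
            rw [hb2]; simp [Matrix.one_apply, ha2]
          rw [hone, hb2, rotQ_apply_j hij, if_neg ha1, if_neg ha2]
        · rw [rotQ_apply_other hb1 hb2, Matrix.one_apply]

end rotlem

private lemma rotM {n d : ℕ} (φ : Fin n → Fin d → ℝ) (p p' : Fin n → ℝ) {i j : Fin n}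
    (hij : i ≠ j) (hsame : φ i = φ j) (c t : ℝ)
    (h2 : c * Real.sqrt (p i) + t * Real.sqrt (p j) = Real.sqrt (p' i))
    (h3 : -t * Real.sqrt (p i) + c * Real.sqrt (p j) = 0)
    (hp'j : p' j = 0)
    (hp'other : ∀ k, k ≠ i → k ≠ j → p' k = p k) :
    (Matrix.of fun (a : Fin d) k => Real.sqrt (p' k) * φ k a)
      = (Matrix.of fun (a : Fin d) k => Real.sqrt (p k) * φ k a) * (rotQ i j c t)ᵀ := by
  ext x y
  rw [Matrix.mul_apply]
  simp only [Matrix.transpose_apply, Matrix.of_apply]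
  rw [Finset.sum_congr rfl fun k _ => mul_comm (Real.sqrt (p k) * φ k x) (rotQ i j c t y k)]
  by_cases hy1 : y = i
  · simp only [hy1, rotQ_apply_i]
    rw [sum_two' hij, ← hsame, ← h2]
    ring
  · by_cases hy2 : y = j
    · simp only [hy2, rotQ_apply_j hij]
      rw [sum_two' hij, ← hsame, hp'j, Real.sqrt_zero]
      linear_combination (-(φ i x)) * h3
    · simp only [rotQ_apply_other hy1 hy2]
      rw [sum_one' y, hp'other y hy1 hy2]

private lemma sigma_eq {n d : ℕ} (φ : Fin n → Fin d → ℝ)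
    (p p' : Fin n → ℝ)
    (i j : Fin n) (hij : i ≠ j) (hsame : φ i = φ j)
    (hp'i : p' i = p i + p j) (hp'j : p' j = 0)
    (hp'other : ∀ k, k ≠ i → k ≠ j → p' k = p k) :
    (Matrix.of fun a b => ∑ k, p k * (φ k a * φ k b)) =
        (Matrix.of fun a b => ∑ k, p' k * (φ k a * φ k b)) := by
  ext a b
  simp only [Matrix.of_apply]
  have key : ∀ k : Fin n, p' k * (φ k a * φ k b) = p k * (φ k a * φ k b)
      + (if k = i then p j * (φ i a * φ i b) else 0)
      - (if k = j then p j * (φ j a * φ j b) else 0) := by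
    intro k
    rcases eq_or_ne k i with rfl | h1
    · rw [if_pos rfl, if_neg hij, hp'i]; ring
    · rcases eq_or_ne k j with rfl | h2
      · rw [if_neg h1, if_pos rfl, hp'j]; ring
      · simp [h1, h2, hp'other k h1 h2]
  rw [Finset.sum_congr rfl fun k _ => key k]
  rw [Finset.sum_sub_distrib, Finset.sum_add_distrib]
  simp [hsame]

private lemma gram_fact {n d : ℕ} (φ : Fin n → Fin d → ℝ) (K : Matrix (Fin n) (Fin n) ℝ)
    (hKdef : ∀ i j, K i j = ∑ a, φ i a * φ j a) (q : Fin n → ℝ) :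
    Matrix.diagonal (fun k => Real.sqrt (q k)) * K * Matrix.diagonal (fun k => Real.sqrt (q k))
      = (Matrix.of fun (a : Fin d) (k : Fin n) => Real.sqrt (q k) * φ k a)ᵀ
        * (Matrix.of fun (a : Fin d) (k : Fin n) => Real.sqrt (q k) * φ k a) := by
  ext k l
  have hL : (Matrix.diagonal (fun k => Real.sqrt (q k)) * K *
      Matrix.diagonal fun k => Real.sqrt (q k)) k l
      = Real.sqrt (q k) * K k l * Real.sqrt (q l) := by
    rw [Matrix.mul_diagonal, Matrix.diagonal_mul]
  rw [hL, Matrix.mul_apply, hKdef, Finset.mul_sum, Finset.sum_mul]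
  simp only [Matrix.transpose_apply, Matrix.of_apply]
  exact Finset.sum_congr rfl fun a _ => by ring
/-- Identical-elements invariance. If two elements have identical unit-norm
feature vectors and their probability masses are merged, the weighted covariance matrix
`Σ_p = ∑ k, p k • φ k φ kᵀ` is unchanged, and hence the probability-weighted Vendi Score
(computed from `diag(√p) K diag(√p)` with `K` the Gram matrix) is unchanged. -/
theorem vendi_score_identical_elements
    {n d : ℕ} (φ : Fin n → Fin d → ℝ) (hφ : ∀ k, ∑ a, φ k a ^ 2 = 1)
    (K : Matrix (Fin n) (Fin n) ℝ) (hKdef : ∀ i j, K i j = ∑ a, φ i a * φ j a)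
    (p p' : Fin n → ℝ) (hp : ∀ k, 0 ≤ p k) (hpsum : ∑ k, p k = 1)
    (i j : Fin n) (hij : i ≠ j) (hsame : φ i = φ j)
    (hp'i : p' i = p i + p j) (hp'j : p' j = 0)
    (hp'other : ∀ k, k ≠ i → k ≠ j → p' k = p k)
    (hH : (Matrix.diagonal (fun k => Real.sqrt (p k)) * K *
            Matrix.diagonal (fun k => Real.sqrt (p k))).IsHermitian)
    (hH' : (Matrix.diagonal (fun k => Real.sqrt (p' k)) * K *
            Matrix.diagonal (fun k => Real.sqrt (p' k))).IsHermitian) :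
    (Matrix.of fun a b => ∑ k, p k * (φ k a * φ k b)) =
        (Matrix.of fun a b => ∑ k, p' k * (φ k a * φ k b)) ∧
      Real.exp (-∑ k, hH.eigenvalues k * Real.log (hH.eigenvalues k)) =
        Real.exp (-∑ k, hH'.eigenvalues k * Real.log (hH'.eigenvalues k)) := by
  constructor
  · exact sigma_eq φ p p' i j hij hsame hp'i hp'j hp'other
  · by_cases hs0 : p i + p j = 0
    · have hpi : p i = 0 := le_antisymm (by linarith [hp j]) (hp i)
      have hpj : p j = 0 := le_antisymm (by linarith [hp i]) (hp j)
      have hpp : p' = p := by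
        funext k
        rcases eq_or_ne k i with rfl | h1
        · rw [hp'i, hpj, add_zero]
        · rcases eq_or_ne k j with rfl | h2
          · rw [hp'j, hpj]
          · exact hp'other k h1 h2
      subst hpp
      rw [Subsingleton.elim hH hH']
    · have hs : 0 < p i + p j := lt_of_le_of_ne (by linarith [hp i, hp j]) (Ne.symm hs0)
      set c : ℝ := Real.sqrt (p i) / Real.sqrt (p i + p j) with hc
      set t : ℝ := Real.sqrt (p j) / Real.sqrt (p i + p j) with ht
      have hss : Real.sqrt (p i + p j) ≠ 0 := (Real.sqrt_pos.mpr hs).ne'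
      have hii : Real.sqrt (p i) * Real.sqrt (p i) = p i := Real.mul_self_sqrt (hp i)
      have hjj : Real.sqrt (p j) * Real.sqrt (p j) = p j := Real.mul_self_sqrt (hp j)
      have key1 : c * c + t * t = 1 := by
        rw [hc, ht, div_mul_div_comm, div_mul_div_comm, hii, hjj,
          Real.mul_self_sqrt hs.le, ← add_div, div_self hs0]
      have key2 : c * Real.sqrt (p i) + t * Real.sqrt (p j) = Real.sqrt (p' i) := by
        rw [hp'i, hc, ht, div_mul_eq_mul_div, div_mul_eq_mul_div, hii, hjj,
          ← add_div, Real.div_sqrt]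
      have key3 : -t * Real.sqrt (p i) + c * Real.sqrt (p j) = 0 := by
        rw [hc, ht]
        field_simp
        ring
      have hfac := gram_fact φ K hKdef p
      have hfac' := gram_fact φ K hKdef p'
      have hMQ := rotM φ p p' hij hsame c t key2 key3 hp'j hp'other
      have hQQ := rotQQ hij key1
      have hconj : Matrix.diagonal (fun k => Real.sqrt (p' k)) * K *
            Matrix.diagonal (fun k => Real.sqrt (p' k))
          = rotQ i j c t * (Matrix.diagonal (fun k => Real.sqrt (p k)) * K *
            Matrix.diagonal (fun k => Real.sqrt (p k))) * (rotQ i j c t)ᵀ := by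
        rw [hfac, hfac', hMQ, Matrix.transpose_mul, Matrix.transpose_transpose]
        simp only [Matrix.mul_assoc]
      have hcp : (Matrix.diagonal (fun k => Real.sqrt (p' k)) * K *
            Matrix.diagonal (fun k => Real.sqrt (p' k))).charpoly
          = (Matrix.diagonal (fun k => Real.sqrt (p k)) * K *
            Matrix.diagonal (fun k => Real.sqrt (p k))).charpoly := by
        rw [hconj]
        exact charpoly_conj _ _ _ hQQ
      have := entropy_eq _ _ hH hH' hcp.symm (fun x => x * Real.log x)
      rw [this]
end

section
/- Partitioning identity for the Vendi Score: with the hypotheses of the block-diagonal setting (M block diagonal with blocks p_i M_i, M_i PSD unit trace, p a probability vector), exp(H_vN(M)) = exp(H(p)) · Π_{i=1}^m exp(H_vN(M_i))^{p_i}, i.e., the Vendi Score of the combined sample is the exponential of the mixing entropy times the weighted geometric mean of the component Vendi Scores. -/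
open Matrix BigOperators
open Polynomial

section Aux
variable {n : Type*} [Fintype n] [DecidableEq n]

lemma my_charpoly_unitary_conj (U D : Matrix n n ℝ) (h1 : U * star U = 1) :
    (U * D * star U).charpoly = D.charpoly := by
  have key : charmatrix (U * D * star U) =
      (C : ℝ →+* ℝ[X]).mapMatrix U * charmatrix D * (C : ℝ →+* ℝ[X]).mapMatrix (star U) := by
    unfold charmatrix
    rw [Matrix.mul_sub, Matrix.sub_mul, _root_.map_mul, _root_.map_mul]
    congr 1
    rw [← (scalar_commute (X : ℝ[X]) (Commute.all X) ((C : ℝ →+* ℝ[X]).mapMatrix U)).eq,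
      mul_assoc, ← RingHom.map_mul, h1, RingHom.map_one, mul_one]
  have hdet : ((C : ℝ →+* ℝ[X]).mapMatrix U).det * ((C : ℝ →+* ℝ[X]).mapMatrix (star U)).det = 1 := by
    rw [← Matrix.det_mul, ← RingHom.map_mul, h1, RingHom.map_one, Matrix.det_one]
  unfold Matrix.charpoly
  rw [key, Matrix.det_mul, Matrix.det_mul, mul_right_comm, hdet, one_mul]

lemma my_charpoly_diagonal (d : n → ℝ) :
    (Matrix.diagonal d).charpoly = ∏ i, (X - C (d i)) := by
  have h : charmatrix (Matrix.diagonal d) = Matrix.diagonal fun i => X - C (d i) := by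
    ext i j
    by_cases hij : i = j
    · subst hij; simp [charmatrix_apply]
    · simp [charmatrix_apply, Matrix.diagonal_apply_ne _ hij, hij]
  rw [Matrix.charpoly, h, det_diagonal]

lemma my_charpoly_hermitian {A : Matrix n n ℝ} (hA : A.IsHermitian) :
    A.charpoly = ∏ i, (X - C (hA.eigenvalues i)) := by
  have hU : (hA.eigenvectorUnitary : Matrix n n ℝ) * star (hA.eigenvectorUnitary : Matrix n n ℝ) = 1 :=
    (Matrix.mem_unitaryGroup_iff).mp hA.eigenvectorUnitary.2
  conv_lhs => rw [hA.spectral_theorem, Unitary.conjStarAlgAut_apply]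
  rw [my_charpoly_unitary_conj _ _ hU]
  have : (RCLike.ofReal ∘ hA.eigenvalues : n → ℝ) = hA.eigenvalues := by
    funext i; simp
  rw [this, my_charpoly_diagonal]

lemma my_eigs_multiset {A : Matrix n n ℝ} (hA : A.IsHermitian) :
    A.charpoly.roots = Finset.univ.val.map hA.eigenvalues := by
  rw [my_charpoly_hermitian hA]
  have : ∏ i, (X - C (hA.eigenvalues i)) =
      ((Finset.univ.val.map hA.eigenvalues).map fun a => X - C a).prod := by
    rw [Multiset.map_map]; rfl
  rw [this, roots_multiset_prod_X_sub_C]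

end Aux

lemma my_det_blockDiagonal' {R : Type*} [CommRing R] {m : ℕ} {ν : Fin m → ℕ}
    (N : ∀ i, Matrix (Fin (ν i)) (Fin (ν i)) R) :
    (blockDiagonal' N).det = ∏ i, (N i).det := by
  rw [(Matrix.blockTriangular_blockDiagonal' N).det_fintype]
  refine Finset.prod_congr rfl fun k _ => ?_
  let e : Fin (ν k) ≃ { a : Σ i, Fin (ν i) // a.fst = k } :=
    { toFun := fun j => ⟨⟨k, j⟩, rfl⟩
      invFun := fun a => Fin.cast (congrArg ν a.2) a.1.snd
      left_inv := fun j => rfl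
      right_inv := by rintro ⟨⟨i, j⟩, rfl⟩; rfl }
  rw [← Matrix.det_submatrix_equiv_self e]
  congr 1
  ext i j
  simp [Matrix.toSquareBlock_def, e, Matrix.blockDiagonal'_apply_eq]

lemma my_charmatrix_blockDiagonal' {R : Type*} [CommRing R] {m : ℕ} {ν : Fin m → ℕ}
    (N : ∀ i, Matrix (Fin (ν i)) (Fin (ν i)) R) :
    charmatrix (blockDiagonal' N) = blockDiagonal' fun i => charmatrix (N i) := by
  ext ⟨k, i⟩ ⟨l, j⟩
  by_cases h : k = l
  · subst h
    by_cases hij : i = j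
    · subst hij
      simp [charmatrix_apply, Matrix.blockDiagonal'_apply_eq]
    · simp [charmatrix_apply, Matrix.blockDiagonal'_apply_eq, Matrix.diagonal_apply,
        hij]
  · have hne : (⟨k, i⟩ : Σ i, Fin (ν i)) ≠ ⟨l, j⟩ := by
      intro hc; exact h (congrArg Sigma.fst hc)
    simp [charmatrix_apply, Matrix.blockDiagonal'_apply_ne _ _ _ h,
      Matrix.diagonal_apply_ne _ hne]

lemma my_charpoly_blockDiagonal' {R : Type*} [CommRing R] {m : ℕ} {ν : Fin m → ℕ}
    (N : ∀ i, Matrix (Fin (ν i)) (Fin (ν i)) R) :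
    (blockDiagonal' N).charpoly = ∏ i, (N i).charpoly := by
  rw [Matrix.charpoly, my_charmatrix_blockDiagonal', my_det_blockDiagonal']
  rfl

/-- Partitioning identity for the Vendi Score: for a block-diagonal PSD
matrix with blocks `p i • M i` (each `M i` PSD with unit trace, `p` a probability vector),
the Vendi Score of the combined matrix equals `exp (H p)` times the `p`-weighted geometric
mean of the blocks' Vendi Scores. -/
theorem vendi_score_partitioning
    {m : ℕ} (ν : Fin m → ℕ) (M : (i : Fin m) → Matrix (Fin (ν i)) (Fin (ν i)) ℝ)
    (hM : ∀ i, (M i).PosSemidef) (htr : ∀ i, (M i).trace = 1)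
    (p : Fin m → ℝ) (hp : ∀ i, 0 ≤ p i) (hpsum : ∑ i, p i = 1)
    (hB : (Matrix.blockDiagonal' (fun i => p i • M i)).IsHermitian) :
    Real.exp (-∑ k, hB.eigenvalues k * Real.log (hB.eigenvalues k)) =
      Real.exp (-∑ i, p i * Real.log (p i)) *
        ∏ i, (Real.exp
            (-∑ j, (hM i).1.eigenvalues j * Real.log ((hM i).1.eigenvalues j))) ^ (p i) := by
  set ev : (i : Fin m) → Fin (ν i) → ℝ := fun i => (hM i).1.eigenvalues with hev
  -- charpoly of each block
  have hblock : ∀ i, (p i • M i).charpoly = ∏ j, (X - Polynomial.C (p i * ev i j)) := by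
    intro i
    have hU : (((hM i).1.eigenvectorUnitary : Matrix (Fin (ν i)) (Fin (ν i)) ℝ)) *
        star ((hM i).1.eigenvectorUnitary : Matrix (Fin (ν i)) (Fin (ν i)) ℝ) = 1 :=
      (Matrix.mem_unitaryGroup_iff).mp (hM i).1.eigenvectorUnitary.2
    have hd : p i • (Matrix.diagonal (RCLike.ofReal ∘ ev i) : Matrix (Fin (ν i)) (Fin (ν i)) ℝ) =
        Matrix.diagonal (fun j => p i * ev i j) := by
      ext j k
      by_cases h : j = k
      · subst h; simp
      · simp [Matrix.diagonal_apply_ne _ h]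
    have : p i • M i = ((hM i).1.eigenvectorUnitary : Matrix (Fin (ν i)) (Fin (ν i)) ℝ) *
        Matrix.diagonal (fun j => p i * ev i j) *
        star ((hM i).1.eigenvectorUnitary : Matrix (Fin (ν i)) (Fin (ν i)) ℝ) := by
      conv_lhs => rw [(hM i).1.spectral_theorem, Unitary.conjStarAlgAut_apply]
      rw [← hd, Matrix.mul_smul, Matrix.smul_mul]
    rw [this, my_charpoly_unitary_conj _ _ hU, my_charpoly_diagonal]
  -- charpoly of the block diagonal matrix, two ways
  have hcp : (∏ k, (X - Polynomial.C (hB.eigenvalues k))) =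
      ∏ i, ∏ j, (X - Polynomial.C (p i * ev i j)) := by
    rw [← my_charpoly_hermitian hB, my_charpoly_blockDiagonal']
    exact Finset.prod_congr rfl fun i _ => hblock i
  -- multiset equality of eigenvalues
  set S : Multiset ℝ :=
    Finset.univ.val.bind (fun i : Fin m => Finset.univ.val.map fun j => p i * ev i j) with hS
  have hmeq : Finset.univ.val.map hB.eigenvalues = S := by
    have h1 : ((Finset.univ.val.map hB.eigenvalues).map fun a => X - Polynomial.C a).prod =
        ∏ k, (X - Polynomial.C (hB.eigenvalues k)) := by
      rw [Multiset.map_map]; rfl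
    have h2 : (S.map fun a => X - Polynomial.C a).prod =
        ∏ i, ∏ j, (X - Polynomial.C (p i * ev i j)) := by
      rw [hS, Multiset.map_bind, Multiset.prod_bind]
      simp only [Multiset.map_map, Function.comp]
      rfl
    have := congrArg Polynomial.roots (h1.trans (hcp.trans h2.symm))
    rwa [Polynomial.roots_multiset_prod_X_sub_C, Polynomial.roots_multiset_prod_X_sub_C] at this
  -- consequence for sums of functions of eigenvalues
  have hsum : ∀ f : ℝ → ℝ, (∑ k, f (hB.eigenvalues k)) = ∑ i, ∑ j, f (p i * ev i j) := by
    intro f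
    have h1 : (∑ k, f (hB.eigenvalues k)) = ((Finset.univ.val.map hB.eigenvalues).map f).sum := by
      rw [Multiset.map_map]; rfl
    rw [h1, hmeq, hS, Multiset.map_bind, Multiset.sum_bind]
    simp only [Multiset.map_map, Function.comp]
    rfl
  -- sums of eigenvalues of blocks are 1
  have htr_ev : ∀ i, ∑ j, ev i j = 1 := by
    intro i
    have h1 : (M i).trace = ∑ j, ev i j := by
      conv_lhs => rw [(hM i).1.spectral_theorem, Unitary.conjStarAlgAut_apply]
      rw [Matrix.trace_mul_comm, ← Matrix.mul_assoc, (Matrix.mem_unitaryGroup_iff').mp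
        (hM i).1.eigenvectorUnitary.2, Matrix.one_mul, Matrix.trace_diagonal]
      simp
      rfl
    rw [← h1, htr i]
  -- entropy splitting pointwise
  have key : ∀ a b : ℝ, 0 ≤ a → 0 ≤ b →
      (a * b) * Real.log (a * b) = b * (a * Real.log a) + a * (b * Real.log b) := by
    intro a b ha hb
    rcases eq_or_lt_of_le ha with h | h
    · simp [← h]
    rcases eq_or_lt_of_le hb with h' | h'
    · simp [← h']
    rw [Real.log_mul h.ne' h'.ne']; ring
  -- main entropy identity
  have hent : (∑ k, hB.eigenvalues k * Real.log (hB.eigenvalues k)) =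
      (∑ i, p i * Real.log (p i)) + ∑ i, p i * ∑ j, ev i j * Real.log (ev i j) := by
    rw [hsum (fun t => t * Real.log t)]
    have : ∀ i, ∑ j, (p i * ev i j) * Real.log (p i * ev i j) =
        p i * Real.log (p i) + p i * ∑ j, ev i j * Real.log (ev i j) := by
      intro i
      have h1 : ∀ j, (p i * ev i j) * Real.log (p i * ev i j) =
          ev i j * (p i * Real.log (p i)) + p i * (ev i j * Real.log (ev i j)) :=
        fun j => key _ _ (hp i) ((hM i).eigenvalues_nonneg j)
      rw [Finset.sum_congr rfl fun j _ => h1 j, Finset.sum_add_distrib, ← Finset.sum_mul,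
        ← Finset.mul_sum, htr_ev i, one_mul]
    rw [Finset.sum_congr rfl fun i _ => this i, Finset.sum_add_distrib]
  -- wrap up with exponentials
  have hpow : ∀ i, (Real.exp (-∑ j, ev i j * Real.log (ev i j))) ^ (p i) =
      Real.exp ((-∑ j, ev i j * Real.log (ev i j)) * p i) := by
    intro i
    rw [Real.rpow_def_of_pos (Real.exp_pos _), Real.log_exp]
  calc Real.exp (-∑ k, hB.eigenvalues k * Real.log (hB.eigenvalues k))
      = Real.exp ((-∑ i, p i * Real.log (p i)) +
          ∑ i, (-∑ j, ev i j * Real.log (ev i j)) * p i) := by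
        congr 1
        rw [hent]
        rw [Finset.sum_congr rfl (fun i _ => by ring :
          ∀ i ∈ Finset.univ, (-∑ j, ev i j * Real.log (ev i j)) * p i
            = -(p i * ∑ j, ev i j * Real.log (ev i j)))]
        rw [Finset.sum_neg_distrib]
        ring
    _ = Real.exp (-∑ i, p i * Real.log (p i)) *
          ∏ i, (Real.exp (-∑ j, ev i j * Real.log (ev i j))) ^ (p i) := by
        rw [Real.exp_add, Real.exp_sum]
        congr 1
        exact Finset.prod_congr rfl fun i _ => (hpow i).symm
end
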